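/- arXiv:1112.3696 — 2 statements merged into one kernel-verified Lean document; each statement's English description precedes it below -/
import Mathlib

section
/- Let X be a compact subset of ℝ, T : X → X Borel measurable, and μ a T-invariant Borel probability measure. Assume: (i) there exists c > 0 such that for every Lipschitz f : X → ℝ, Σ_{k=1}^{∞} |Cov_f(k)| ≤ c ‖f‖_Lip² with Cov_f(k) = ∫ f·(f∘T^k) dμ − (∫ f dμ)² and ‖f‖_Lip = Lip(f) + ‖f‖_∞, and let B > 0 be such that ∫ κ(E_n(x), μ) dμ(x) ≤ B n^{−1/4} for all n, where E_n(x) = (1/n) Σ_{i<n} δ_{T^i x}; (ii) (X,T,μ) satisfies the exponential concentration inequality. Then there exists D > 0 such that for every ε > 0, every n ≥ 1, and every t > 0, the observed empirical measure Ẽ_n = (1/n) Σ_{i=0}^{n−1} δ_{y_i} satisfies μ_n ⊗ P^n(κ(Ẽ_n, μ) > (t + B)/n^{1/4} + ε) ≤ exp(−t² √n / (4 D (1 + ε²))). -/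
open MeasureTheory Real

noncomputable section

/-- `K` is separately Lipschitz in each of its `n` variables, with
`L j` a Lipschitz constant for the `j`-th variable. -/
def SepLip {n : ℕ} (K : (Fin n → ℝ) → ℝ) (L : Fin n → ℝ) : Prop :=
  ∀ (x : Fin n → ℝ) (j : Fin n) (y : ℝ),
    |K x - K (Function.update x j y)| ≤ L j * dist (x j) y

/-- The Kantorovich distance between two measures:
`κ(ν₁, ν₂) = sup { ∫ g dν₁ - ∫ g dν₂ : g Lipschitz with constant at most 1 }`. -/
def kantorovich (ν₁ ν₂ : Measure ℝ) : ℝ :=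
  ⨆ g : {g : ℝ → ℝ // LipschitzWith 1 g}, (∫ x, g.1 x ∂ν₁ - ∫ x, g.1 x ∂ν₂)

/-- The empirical measure `E_n(x) = (1/n) ∑_{i<n} δ_{T^i x}`. -/
def empiricalMeasure (T : ℝ → ℝ) (n : ℕ) (x : ℝ) : Measure ℝ :=
  (n : ENNReal)⁻¹ • ∑ i ∈ Finset.range n, Measure.dirac (T^[i] x)

/-- The observed empirical measure `Ẽ_n = (1/n) ∑_{i<n} δ_{y_i}`,
where `y_i = T^i x + ε ξ_i`. -/
def obsEmpirical {n : ℕ} (T : ℝ → ℝ) (ε : ℝ) (p : ℝ × (Fin n → ℝ)) : Measure ℝ :=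
  (n : ENNReal)⁻¹ • ∑ i : Fin n, Measure.dirac (T^[(i : ℕ)] p.1 + ε * p.2 i)

/-! ### Auxiliary material -/

/-- The empirical measure built from an `n`-tuple of points. -/
def empMeas (n : ℕ) (v : Fin n → ℝ) : Measure ℝ :=
  (n : ENNReal)⁻¹ • ∑ i : Fin n, Measure.dirac (v i)

/-- Kantorovich distance from the empirical measure of a tuple to `μ`. -/
def Phi (μ : Measure ℝ) (n : ℕ) (v : Fin n → ℝ) : ℝ :=
  kantorovich (empMeas n v) μ

instance : Nonempty {g : ℝ → ℝ // LipschitzWith 1 g} :=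
  ⟨⟨fun _ => 0, (LipschitzWith.const 0).weaken zero_le_one⟩⟩

lemma integral_empMeas {n : ℕ} (hn : n ≠ 0) (v : Fin n → ℝ) (g : ℝ → ℝ) :
    ∫ x, g x ∂(empMeas n v) = (n : ℝ)⁻¹ * ∑ i, g (v i) := by
  rw [empMeas, integral_smul_measure, integral_finset_sum_measure]
  · simp [ENNReal.toReal_inv, smul_eq_mul]
  · intro i _
    exact (integrable_const (g (v i))).congr (MeasureTheory.ae_eq_dirac g).symm

lemma sepLip_telescope {n : ℕ} {K : (Fin n → ℝ) → ℝ} {L : Fin n → ℝ}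
    (h : SepLip K L) (v w : Fin n → ℝ) :
    |K v - K w| ≤ ∑ j, L j * dist (v j) (w j) := by
  classical
  have main : ∀ s : Finset (Fin n),
      |K v - K (s.piecewise w v)| ≤ ∑ j ∈ s, L j * dist (v j) (w j) := by
    intro s
    induction s using Finset.induction_on with
    | empty => simp
    | @insert a s ha ih =>
      rw [Finset.piecewise_insert, Finset.sum_insert ha]
      have h1 := h (s.piecewise w v) a (w a)
      have h2 : (s.piecewise w v) a = v a := Finset.piecewise_eq_of_notMem _ _ _ ha
      calc |K v - K (Function.update (s.piecewise w v) a (w a))|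
          ≤ |K v - K (s.piecewise w v)|
            + |K (s.piecewise w v) - K (Function.update (s.piecewise w v) a (w a))| := by
            have := abs_sub_abs_le_abs_sub (K v - K (s.piecewise w v)) 0
            exact abs_sub_le _ _ _
        _ ≤ ∑ j ∈ s, L j * dist (v j) (w j) + L a * dist (v a) (w a) := by
            rw [h2] at h1; exact add_le_add ih h1
        _ = L a * dist (v a) (w a) + ∑ j ∈ s, L j * dist (v j) (w j) := by ring
  simpa [Finset.piecewise_univ] using main Finset.univ

lemma abs_ciSup_sub_ciSup {ι : Sort*} [Nonempty ι] {A B : ι → ℝ}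
    (hA : BddAbove (Set.range A)) (hB : BddAbove (Set.range B)) {δ : ℝ}
    (h : ∀ g, |A g - B g| ≤ δ) : |(⨆ g, A g) - ⨆ g, B g| ≤ δ := by
  rw [abs_sub_le_iff]
  constructor
  · rw [sub_le_iff_le_add]
    refine ciSup_le fun g => ?_
    have h1 := (abs_sub_le_iff.mp (h g)).1
    have h2 := le_ciSup hB g
    linarith
  · rw [sub_le_iff_le_add]
    refine ciSup_le fun g => ?_
    have h1 := (abs_sub_le_iff.mp (h g)).2
    have h2 := le_ciSup hA g
    linarith

lemma lip_abs_le {g : ℝ → ℝ} (hg : LipschitzWith 1 g) (x : ℝ) : |g x - g 0| ≤ |x| := by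
  have := hg.dist_le_mul x 0
  simpa [Real.dist_eq] using this

lemma integrable_abs_of_bdd {μ : Measure ℝ} [IsProbabilityMeasure μ] {R : ℝ}
    (hbd : ∀ᵐ x ∂μ, |x| ≤ R) : Integrable (fun x => |x|) μ := by
  refine Integrable.mono' (integrable_const R) measurable_abs.aestronglyMeasurable ?_
  filter_upwards [hbd] with x hx
  simpa [abs_abs] using hx

lemma integrable_of_lip {μ : Measure ℝ} [IsProbabilityMeasure μ] {R : ℝ}
    (hbd : ∀ᵐ x ∂μ, |x| ≤ R) {g : ℝ → ℝ} (hg : LipschitzWith 1 g) :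
    Integrable g μ := by
  refine Integrable.mono' (integrable_const (|g 0| + R))
    hg.continuous.aestronglyMeasurable ?_
  filter_upwards [hbd] with x hx
  have h1 := (abs_le.mp (lip_abs_le hg x)).2
  have h0 := (abs_le.mp (lip_abs_le hg x)).1
  rw [Real.norm_eq_abs, abs_le]
  constructor
  · linarith [neg_abs_le (g 0)]
  · linarith [le_abs_self (g 0)]

lemma integral_lip_ge {μ : Measure ℝ} [IsProbabilityMeasure μ] {R : ℝ}
    (hbd : ∀ᵐ x ∂μ, |x| ≤ R) {g : ℝ → ℝ} (hg : LipschitzWith 1 g) :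
    g 0 - (∫ x, |x| ∂μ) ≤ ∫ x, g x ∂μ := by
  have habs := integrable_abs_of_bdd hbd
  have h1 : Integrable (fun x => g 0 - |x|) μ := (integrable_const _).sub habs
  have h2 : ∫ x, (g 0 - |x|) ∂μ ≤ ∫ x, g x ∂μ := by
    refine integral_mono h1 (integrable_of_lip hbd hg) fun x => ?_
    have := (abs_le.mp (lip_abs_le hg x)).2
    simp only [tsub_le_iff_right]
    linarith [(abs_le.mp (lip_abs_le hg x)).1]
  have h3 : ∫ x, (g 0 - |x|) ∂μ = g 0 - ∫ x, |x| ∂μ := by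
    rw [integral_sub (integrable_const _) habs, integral_const]
    simp
  linarith

lemma val_le {μ : Measure ℝ} [IsProbabilityMeasure μ] {R : ℝ}
    (hbd : ∀ᵐ x ∂μ, |x| ≤ R) {n : ℕ} (hn : n ≠ 0) (v : Fin n → ℝ)
    {g : ℝ → ℝ} (hg : LipschitzWith 1 g) :
    (∫ x, g x ∂(empMeas n v)) - ∫ x, g x ∂μ
      ≤ (n : ℝ)⁻¹ * ∑ i, |v i| + ∫ x, |x| ∂μ := by
  rw [integral_empMeas hn]
  have hnpos : (0:ℝ) < n := by
    have := Nat.pos_of_ne_zero hn; exact_mod_cast this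
  have h1 : ∀ i : Fin n, g (v i) ≤ g 0 + |v i| := fun i => by
    have := (abs_le.mp (lip_abs_le hg (v i))).2; linarith
  have hs : ∑ i, g (v i) ≤ (n : ℝ) * g 0 + ∑ i, |v i| := by
    calc ∑ i, g (v i) ≤ ∑ i : Fin n, (g 0 + |v i|) := Finset.sum_le_sum fun i _ => h1 i
      _ = (n : ℝ) * g 0 + ∑ i, |v i| := by
          rw [Finset.sum_add_distrib, Finset.sum_const, Finset.card_univ,
            Fintype.card_fin, nsmul_eq_mul]
  have h2 : (n:ℝ)⁻¹ * ∑ i, g (v i) ≤ g 0 + (n:ℝ)⁻¹ * ∑ i, |v i| := by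
    have := mul_le_mul_of_nonneg_left hs (inv_nonneg.mpr hnpos.le)
    calc (n:ℝ)⁻¹ * ∑ i, g (v i) ≤ (n:ℝ)⁻¹ * ((n : ℝ) * g 0 + ∑ i, |v i|) := this
      _ = g 0 + (n:ℝ)⁻¹ * ∑ i, |v i| := by field_simp
  have h3 := integral_lip_ge hbd hg
  linarith

lemma phi_bdd {μ : Measure ℝ} [IsProbabilityMeasure μ] {R : ℝ}
    (hbd : ∀ᵐ x ∂μ, |x| ≤ R) {n : ℕ} (hn : n ≠ 0) (v : Fin n → ℝ) :
    BddAbove (Set.range fun g : {g : ℝ → ℝ // LipschitzWith 1 g} =>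
      (∫ x, g.1 x ∂(empMeas n v)) - ∫ x, g.1 x ∂μ) := by
  refine ⟨(n : ℝ)⁻¹ * ∑ i, |v i| + ∫ x, |x| ∂μ, ?_⟩
  rintro y ⟨g, rfl⟩
  exact val_le hbd hn v g.2

lemma phi_le {μ : Measure ℝ} [IsProbabilityMeasure μ] {R : ℝ}
    (hbd : ∀ᵐ x ∂μ, |x| ≤ R) {n : ℕ} (hn : n ≠ 0) (v : Fin n → ℝ) :
    Phi μ n v ≤ (n : ℝ)⁻¹ * ∑ i, |v i| + ∫ x, |x| ∂μ :=
  ciSup_le fun g => val_le hbd hn v g.2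

lemma phi_nonneg {μ : Measure ℝ} [IsProbabilityMeasure μ] {R : ℝ}
    (hbd : ∀ᵐ x ∂μ, |x| ≤ R) {n : ℕ} (hn : n ≠ 0) (v : Fin n → ℝ) :
    0 ≤ Phi μ n v := by
  have h0 := le_ciSup (phi_bdd hbd hn v)
    (⟨fun _ => 0, (LipschitzWith.const 0).weaken zero_le_one⟩ :
      {g : ℝ → ℝ // LipschitzWith 1 g})
  simp at h0; exact h0

lemma phi_sepLip {μ : Measure ℝ} [IsProbabilityMeasure μ] {R : ℝ}
    (hbd : ∀ᵐ x ∂μ, |x| ≤ R) {n : ℕ} (hn : n ≠ 0) :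
    SepLip (Phi μ n) (fun _ => (n : ℝ)⁻¹) := by
  classical
  intro v j y
  have hnpos : (0:ℝ) < n := by
    have := Nat.pos_of_ne_zero hn; exact_mod_cast this
  refine abs_ciSup_sub_ciSup (phi_bdd hbd hn v) (phi_bdd hbd hn _) fun g => ?_
  have hkey : (∫ x, g.1 x ∂(empMeas n v)) - ∫ x, g.1 x ∂μ
      - ((∫ x, g.1 x ∂(empMeas n (Function.update v j y))) - ∫ x, g.1 x ∂μ)
      = (n : ℝ)⁻¹ * (g.1 (v j) - g.1 y) := by
    rw [integral_empMeas hn, integral_empMeas hn]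
    have hupdate : ∑ i, g.1 (Function.update v j y i)
        = ∑ i, Function.update (fun i => g.1 (v i)) j (g.1 y) i := by
      refine Finset.sum_congr rfl fun i _ => ?_
      by_cases h : i = j
      · subst h; simp
      · simp [Function.update_of_ne h]
    rw [hupdate, Finset.sum_update_of_mem (Finset.mem_univ j),
      ← Finset.add_sum_erase _ _ (Finset.mem_univ j), Finset.erase_eq]
    ring
  rw [hkey, abs_mul, abs_of_nonneg (inv_nonneg.mpr hnpos.le)]
  have := g.2.dist_le_mul (v j) y
  rw [Real.dist_eq] at this
  have h2 : |g.1 (v j) - g.1 y| ≤ dist (v j) y := by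
    rw [Real.dist_eq]
    simpa [Real.dist_eq] using this
  exact mul_le_mul_of_nonneg_left h2 (inv_nonneg.mpr hnpos.le)

lemma phi_continuous {μ : Measure ℝ} [IsProbabilityMeasure μ] {R : ℝ}
    (hbd : ∀ᵐ x ∂μ, |x| ≤ R) {n : ℕ} (hn : n ≠ 0) :
    Continuous (Phi μ n) := by
  have hnpos : (0:ℝ) < n := by
    have := Nat.pos_of_ne_zero hn; exact_mod_cast this
  refine (LipschitzWith.of_dist_le_mul (K := 1) fun v w => ?_).continuous
  have htel := sepLip_telescope (phi_sepLip hbd hn) v w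
  have hb : ∑ j : Fin n, (n:ℝ)⁻¹ * dist (v j) (w j)
      ≤ ∑ _j : Fin n, (n:ℝ)⁻¹ * dist v w := by
    refine Finset.sum_le_sum fun j _ => ?_
    exact mul_le_mul_of_nonneg_left (dist_le_pi_dist v w j) (inv_nonneg.mpr hnpos.le)
  have hc : ∑ _j : Fin n, (n:ℝ)⁻¹ * dist v w = dist v w := by
    rw [Finset.sum_const, Finset.card_univ, Fintype.card_fin, nsmul_eq_mul]
    field_simp
  rw [Real.dist_eq]
  push_cast
  calc |Phi μ n v - Phi μ n w| ≤ ∑ j : Fin n, (n:ℝ)⁻¹ * dist (v j) (w j) := htel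
    _ ≤ dist v w := by rw [← hc]; exact hb
    _ ≤ 1 * dist v w := by rw [one_mul]

lemma meas_le_integral_div {μ : Measure ℝ} [IsProbabilityMeasure μ] {f : ℝ → ℝ}
    (hpos : ∀ x, 0 ≤ f x) (hfi : Integrable f μ) {s : Set ℝ} {r : ℝ} (hr : 0 < r)
    (hs : ∀ x ∈ s, r ≤ f x) : (μ s).toReal ≤ (∫ x, f x ∂μ) / r := by
  have h1 : s ⊆ {x | r ≤ f x} := fun x hx => hs x hx
  have h2 : (μ s).toReal ≤ (μ {x | r ≤ f x}).toReal :=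
    ENNReal.toReal_mono (measure_ne_top μ _) (measure_mono h1)
  have h3 := mul_meas_ge_le_integral_of_nonneg (ae_of_all _ hpos) hfi r
  rw [le_div_iff₀ hr]
  calc (μ s).toReal * r ≤ (μ {x | r ≤ f x}).toReal * r := by
        exact mul_le_mul_of_nonneg_right h2 hr.le
    _ = r * (μ {x | r ≤ f x}).toReal := by ring
    _ ≤ ∫ x, f x ∂μ := h3

set_option maxHeartbeats 1000000 in
/-- Speed of convergence of the observed empirical measure, exponential case:
`μ_n ⊗ P^n(κ(Ẽ_n, μ) > (t+B)/n^{1/4} + ε) ≤ exp(-t²√n / (4D(1+ε²)))`. -/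
theorem observed_empirical_measure_speed_exponential
    (X : Set ℝ) (hX : IsCompact X) (T : ℝ → ℝ) (hT : Measurable T)
    (hTX : Set.MapsTo T X X)
    (μ : Measure ℝ) [IsProbabilityMeasure μ] (hμX : μ X = 1) (hinv : μ.map T = μ)
    (c : ℝ) (hc : 0 < c)
    (hcov : ∀ (f : ℝ → ℝ), Measurable f → ∀ Lf Mf : ℝ,
      (∀ x ∈ X, ∀ y ∈ X, |f x - f y| ≤ Lf * dist x y) →
      (∀ x ∈ X, |f x| ≤ Mf) →
      Summable (fun k : ℕ =>
        |∫ x, f x * f (T^[k + 1] x) ∂μ - (∫ x, f x ∂μ) ^ 2|) ∧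
      ∑' k : ℕ, |∫ x, f x * f (T^[k + 1] x) ∂μ - (∫ x, f x ∂μ) ^ 2|
        ≤ c * (Lf + Mf) ^ 2)
    (B : ℝ) (hB : 0 < B)
    (hBbound : ∀ n : ℕ, 1 ≤ n →
      ∫ x, kantorovich (empiricalMeasure T n x) μ ∂μ
        ≤ B * (n : ℝ) ^ (-(1 / 4 : ℝ)))
    (C : ℝ) (hC : 0 < C)
    (hconc : ∀ (n : ℕ), 1 ≤ n → ∀ (K : (Fin n → ℝ) → ℝ) (L : Fin n → ℝ), SepLip K L →
      ∫ x, Real.exp (K (fun i => T^[(i : ℕ)] x)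
          - ∫ z, K (fun i => T^[(i : ℕ)] z) ∂μ) ∂μ
        ≤ Real.exp (C * ∑ j, L j ^ 2))
    (P : Measure ℝ) [IsProbabilityMeasure P] (hP : ∀ᵐ ξ ∂P, |ξ| ≤ 1) :
    ∃ D : ℝ, 0 < D ∧ ∀ ε : ℝ, 0 < ε → ∀ (n : ℕ), 1 ≤ n → ∀ t : ℝ, 0 < t →
      ((μ.prod (Measure.pi fun _ : Fin n => P))
          {p | (t + B) / (n : ℝ) ^ ((1 : ℝ) / 4) + ε
            < kantorovich (obsEmpirical T ε p) μ}).toReal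
        ≤ Real.exp (-(t ^ 2 * Real.sqrt n) / (4 * D * (1 + ε ^ 2))) := by
  classical
  -- a radius bound for X
  obtain ⟨R0, hR0⟩ := hX.isBounded.subset_closedBall 0
  set R : ℝ := max R0 0 with hRdef
  have hRX : ∀ x ∈ X, |x| ≤ R := by
    intro x hx
    have := hR0 hx
    rw [Metric.mem_closedBall, Real.dist_eq, sub_zero] at this
    exact this.trans (le_max_left _ _)
  have hRnn : (0:ℝ) ≤ R := le_max_right _ _
  have hXmeas : MeasurableSet X := hX.isClosed.measurableSet
  have hXae : ∀ᵐ x ∂μ, x ∈ X := by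
    rw [ae_iff]
    have hcompl : μ Xᶜ = 0 := by
      rw [measure_compl hXmeas (measure_ne_top μ X), hμX, measure_univ, tsub_self]
    simpa [Set.compl_def] using hcompl
  have hbd : ∀ᵐ x ∂μ, |x| ≤ R := by
    filter_upwards [hXae] with x hx using hRX x hx
  set Mμ : ℝ := ∫ x, |x| ∂μ with hMμdef
  have hMμnn : 0 ≤ Mμ := integral_nonneg fun x => abs_nonneg x
  refine ⟨C, hC, ?_⟩
  intro ε hε n hn t ht
  have hnne : n ≠ 0 := Nat.one_le_iff_ne_zero.mp hn
  have hn0 : (0:ℝ) < n := by exact_mod_cast Nat.pos_of_ne_zero hnne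
  set n4 : ℝ := (n : ℝ) ^ ((1 : ℝ) / 4) with hn4def
  have hn4 : 0 < n4 := Real.rpow_pos_of_pos hn0 _
  set u : ℝ := t / n4 with hudef
  have hu : 0 < u := div_pos ht hn4
  set l : ℝ := u * n / (2 * C) with hldef
  have hl : 0 < l := by positivity
  set m : ℝ := ∫ x, Phi μ n (fun i => T^[(i : ℕ)] x) ∂μ with hmdef
  -- the trajectory map is measurable
  have hvec : Measurable (fun x => (fun i : Fin n => T^[(i : ℕ)] x)) :=
    measurable_pi_lambda _ fun i => hT.iterate (i : ℕ)
  have hFmeas : Measurable (fun x => Phi μ n (fun i : Fin n => T^[(i : ℕ)] x)) :=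
    (phi_continuous hbd hnne).measurable.comp hvec
  -- a.e. bound on Phi along trajectories
  have hFle : ∀ x ∈ X, Phi μ n (fun i : Fin n => T^[(i : ℕ)] x) ≤ R + Mμ := by
    intro x hx
    have h1 := phi_le hbd hnne (fun i : Fin n => T^[(i : ℕ)] x)
    have h2 : (n:ℝ)⁻¹ * ∑ i : Fin n, |T^[(i : ℕ)] x| ≤ R := by
      have hsum : ∑ i : Fin n, |T^[(i : ℕ)] x| ≤ ∑ _i : Fin n, R :=
        Finset.sum_le_sum fun i _ => hRX _ (hTX.iterate (i : ℕ) hx)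
      rw [Finset.sum_const, Finset.card_univ, Fintype.card_fin, nsmul_eq_mul] at hsum
      calc (n:ℝ)⁻¹ * ∑ i : Fin n, |T^[(i : ℕ)] x| ≤ (n:ℝ)⁻¹ * ((n:ℝ) * R) :=
            mul_le_mul_of_nonneg_left hsum (inv_nonneg.mpr hn0.le)
        _ = R := by rw [← mul_assoc, inv_mul_cancel₀ (ne_of_gt hn0), one_mul]
    linarith
  have hFnn : ∀ x, 0 ≤ Phi μ n (fun i : Fin n => T^[(i : ℕ)] x) :=
    fun x => phi_nonneg hbd hnne _
  -- integrability of Phi along trajectories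
  have hFint : Integrable (fun x => Phi μ n (fun i : Fin n => T^[(i : ℕ)] x)) μ := by
    refine Integrable.mono' (integrable_const (R + Mμ)) hFmeas.aestronglyMeasurable ?_
    filter_upwards [hXae] with x hx
    rw [Real.norm_eq_abs, abs_of_nonneg (hFnn x)]
    exact hFle x hx
  -- bound on the mean
  have hm_le : m ≤ B / n4 := by
    have h1 := hBbound n hn
    have h2 : ∫ x, kantorovich (empiricalMeasure T n x) μ ∂μ = m := by
      rw [hmdef]
      refine integral_congr_ae (Filter.Eventually.of_forall fun x => ?_)
      have : empiricalMeasure T n x = empMeas n (fun i : Fin n => T^[(i : ℕ)] x) := by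
        rw [empiricalMeasure, empMeas,
          Fin.sum_univ_eq_sum_range (fun i => Measure.dirac (T^[i] x)) n]
      exact congrArg (fun ν => kantorovich ν μ) this
    rw [← h2]
    calc ∫ x, kantorovich (empiricalMeasure T n x) μ ∂μ
        ≤ B * (n : ℝ) ^ (-(1 / 4 : ℝ)) := h1
      _ = B / n4 := by
          rw [hn4def, Real.rpow_neg hn0.le]
          exact (div_eq_mul_inv B _).symm
  -- concentration applied to l • Phi
  have hK : SepLip (fun v => l * Phi μ n v) (fun _ => l * (n : ℝ)⁻¹) := by
    intro v j y
    have h1 := phi_sepLip hbd hnne v j y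
    calc |l * Phi μ n v - l * Phi μ n (Function.update v j y)|
        = l * |Phi μ n v - Phi μ n (Function.update v j y)| := by
          rw [← mul_sub, abs_mul, abs_of_pos hl]
      _ ≤ l * ((n:ℝ)⁻¹ * dist (v j) y) := mul_le_mul_of_nonneg_left h1 hl.le
      _ = l * (n:ℝ)⁻¹ * dist (v j) y := by ring
  have hconc' := hconc n hn (fun v => l * Phi μ n v) (fun _ => l * (n : ℝ)⁻¹) hK
  rw [integral_const_mul] at hconc'
  rw [← hmdef] at hconc'
  -- Chernoff bound
  set f : ℝ → ℝ := fun x => Real.exp (l * Phi μ n (fun i : Fin n => T^[(i : ℕ)] x) - l * m)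
    with hfdef
  have hfint : Integrable f μ := by
    have hmeas : Measurable f := by
      refine Real.measurable_exp.comp ?_
      exact (hFmeas.const_mul l).sub measurable_const
    refine Integrable.mono' (integrable_const (Real.exp (l * (R + Mμ) - l * m)))
      hmeas.aestronglyMeasurable ?_
    filter_upwards [hXae] with x hx
    rw [hfdef, Real.norm_eq_abs, abs_of_nonneg (Real.exp_pos _).le, Real.exp_le_exp]
    have := hFle x hx
    nlinarith [hl.le]
  have hfbound : ∫ x, f x ∂μ ≤ Real.exp (C * ∑ _j : Fin n, (l * (n:ℝ)⁻¹) ^ 2) := hconc'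
  set sA : Set ℝ := {x | (t + B) / n4 < Phi μ n (fun i : Fin n => T^[(i : ℕ)] x)}
    with hsAdef
  have hsmem : ∀ x ∈ sA, Real.exp (l * u) ≤ f x := by
    intro x hx
    have hx' : (t + B) / n4 < Phi μ n (fun i : Fin n => T^[(i : ℕ)] x) := hx
    have hmu : m + u ≤ (t + B) / n4 := by
      have hdiv : (t + B) / n4 = B / n4 + t / n4 := by
        rw [← add_div]; ring_nf
      rw [hdiv, ← hudef]
      linarith
    simp only [hfdef]
    rw [Real.exp_le_exp]
    have h3 : u ≤ Phi μ n (fun i : Fin n => T^[(i : ℕ)] x) - m := by linarith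
    have h4 := mul_le_mul_of_nonneg_left h3 hl.le
    rw [mul_sub] at h4
    linarith
  have hchern : (μ sA).toReal
      ≤ Real.exp (C * ∑ _j : Fin n, (l * (n:ℝ)⁻¹) ^ 2 - l * u) := by
    have hstep := meas_le_integral_div (fun x => (Real.exp_pos _).le) hfint
      (Real.exp_pos (l * u)) hsmem
    calc (μ sA).toReal ≤ (∫ x, f x ∂μ) / Real.exp (l * u) := hstep
      _ ≤ Real.exp (C * ∑ _j : Fin n, (l * (n:ℝ)⁻¹) ^ 2) / Real.exp (l * u) := by
          gcongr
      _ = Real.exp (C * ∑ _j : Fin n, (l * (n:ℝ)⁻¹) ^ 2 - l * u) := by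
          rw [Real.exp_sub]
  -- arithmetic: identify the exponent
  have hsq : n4 ^ 2 = Real.sqrt n := by
    rw [hn4def, Real.sqrt_eq_rpow, ← Real.rpow_natCast ((n:ℝ) ^ ((1:ℝ)/4)) 2,
      ← Real.rpow_mul hn0.le]
    norm_num
  have hs2 : Real.sqrt n * Real.sqrt n = (n:ℝ) := Real.mul_self_sqrt hn0.le
  have hsqrtpos : 0 < Real.sqrt n := Real.sqrt_pos.mpr hn0
  have hsum_eq : ∑ _j : Fin n, (l * (n:ℝ)⁻¹) ^ 2 = (n:ℝ) * (l * (n:ℝ)⁻¹) ^ 2 := by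
    rw [Finset.sum_const, Finset.card_univ, Fintype.card_fin, nsmul_eq_mul]
  have h1 : u ^ 2 * (n:ℝ) = t ^ 2 * Real.sqrt n := by
    have hn4ne : n4 ≠ 0 := ne_of_gt hn4
    have hsne : Real.sqrt n ≠ 0 := ne_of_gt hsqrtpos
    rw [hudef, div_pow, hsq]
    rw [div_mul_eq_mul_div, div_eq_iff hsne, mul_assoc, hs2]
  have hexp_eq : C * ∑ _j : Fin n, (l * (n:ℝ)⁻¹) ^ 2 - l * u
      = -(t ^ 2 * Real.sqrt n) / (4 * C) := by
    rw [hsum_eq, ← h1, hldef]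
    have hCne : C ≠ 0 := ne_of_gt hC
    have hnne' : (n:ℝ) ≠ 0 := ne_of_gt hn0
    field_simp
    ring
  have hfinal1 : (μ sA).toReal ≤ Real.exp (-(t ^ 2 * Real.sqrt n) / (4 * C)) := by
    rw [← hexp_eq]; exact hchern
  have hfinal2 : Real.exp (-(t ^ 2 * Real.sqrt n) / (4 * C))
      ≤ Real.exp (-(t ^ 2 * Real.sqrt n) / (4 * C * (1 + ε ^ 2))) := by
    rw [Real.exp_le_exp, neg_div, neg_div, neg_le_neg_iff]
    refine div_le_div_of_nonneg_left ?_ ?_ ?_ |>.trans_eq rfl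
    · positivity
    · positivity
    · nlinarith [sq_nonneg ε]
  -- reduce the product event to sA
  have hPnull : P {ξ : ℝ | 1 < |ξ|} = 0 := by
    have h := ae_iff.mp hP
    simpa [not_le] using h
  set Bad : Set (Fin n → ℝ) := ⋃ i : Fin n, Function.eval i ⁻¹' {ξ : ℝ | 1 < |ξ|}
    with hBaddef
  have hBadnull : (Measure.pi fun _ : Fin n => P) Bad = 0 :=
    measure_iUnion_null fun i => Measure.pi_eval_preimage_null _ hPnull
  have hsub : {p : ℝ × (Fin n → ℝ) |
        (t + B) / n4 + ε < kantorovich (obsEmpirical T ε p) μ}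
      ⊆ (Set.univ ×ˢ Bad) ∪ (sA ×ˢ Set.univ) := by
    intro p hp
    by_cases hb : ∃ i : Fin n, 1 < |p.2 i|
    · refine Or.inl ⟨Set.mem_univ _, ?_⟩
      obtain ⟨i, hi⟩ := hb
      exact Set.mem_iUnion.mpr ⟨i, hi⟩
    · right
      refine ⟨?_, Set.mem_univ _⟩
      have hgood : ∀ i, |p.2 i| ≤ 1 := by
        push_neg at hb
        exact hb
      have heq : kantorovich (obsEmpirical T ε p) μ
          = Phi μ n (fun i : Fin n => T^[(i : ℕ)] p.1 + ε * p.2 i) := rfl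
      have htel := sepLip_telescope (phi_sepLip hbd hnne)
        (fun i : Fin n => T^[(i : ℕ)] p.1 + ε * p.2 i)
        (fun i : Fin n => T^[(i : ℕ)] p.1)
      have hdist : ∑ j : Fin n,
          (n:ℝ)⁻¹ * dist (T^[(j : ℕ)] p.1 + ε * p.2 j) (T^[(j : ℕ)] p.1) ≤ ε := by
        have h1 : ∀ j : Fin n,
            (n:ℝ)⁻¹ * dist (T^[(j : ℕ)] p.1 + ε * p.2 j) (T^[(j : ℕ)] p.1)
              ≤ (n:ℝ)⁻¹ * ε := by
          intro j
          have hd : dist (T^[(j : ℕ)] p.1 + ε * p.2 j) (T^[(j : ℕ)] p.1) ≤ ε := by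
            rw [Real.dist_eq, add_sub_cancel_left, abs_mul, abs_of_pos hε]
            calc ε * |p.2 j| ≤ ε * 1 := mul_le_mul_of_nonneg_left (hgood j) hε.le
              _ = ε := mul_one ε
          exact mul_le_mul_of_nonneg_left hd (inv_nonneg.mpr hn0.le)
        calc ∑ j : Fin n,
              (n:ℝ)⁻¹ * dist (T^[(j : ℕ)] p.1 + ε * p.2 j) (T^[(j : ℕ)] p.1)
            ≤ ∑ _j : Fin n, (n:ℝ)⁻¹ * ε := Finset.sum_le_sum fun j _ => h1 j
          _ = ε := by
              rw [Finset.sum_const, Finset.card_univ, Fintype.card_fin, nsmul_eq_mul,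
                ← mul_assoc, mul_inv_cancel₀ (ne_of_gt hn0), one_mul]
      have habs : |Phi μ n (fun i : Fin n => T^[(i : ℕ)] p.1 + ε * p.2 i)
          - Phi μ n (fun i : Fin n => T^[(i : ℕ)] p.1)| ≤ ε := htel.trans hdist
      have h2 := (abs_le.mp habs).2
      have hp' : (t + B) / n4 + ε < kantorovich (obsEmpirical T ε p) μ := hp
      rw [heq] at hp'
      simp only [hsAdef, Set.mem_setOf_eq]
      linarith
  have hmeasle : (μ.prod (Measure.pi fun _ : Fin n => P))
      {p : ℝ × (Fin n → ℝ) | (t + B) / n4 + ε < kantorovich (obsEmpirical T ε p) μ}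
      ≤ μ sA := by
    calc (μ.prod (Measure.pi fun _ : Fin n => P))
          {p : ℝ × (Fin n → ℝ) |
            (t + B) / n4 + ε < kantorovich (obsEmpirical T ε p) μ}
        ≤ (μ.prod (Measure.pi fun _ : Fin n => P))
            ((Set.univ ×ˢ Bad) ∪ (sA ×ˢ Set.univ)) := measure_mono hsub
      _ ≤ (μ.prod (Measure.pi fun _ : Fin n => P)) (Set.univ ×ˢ Bad)
          + (μ.prod (Measure.pi fun _ : Fin n => P)) (sA ×ˢ Set.univ) :=
          measure_union_le _ _
      _ = μ Set.univ * (Measure.pi fun _ : Fin n => P) Bad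
          + μ sA * (Measure.pi fun _ : Fin n => P) Set.univ := by
          rw [Measure.prod_prod, Measure.prod_prod]
      _ = μ sA := by rw [hBadnull, measure_univ]; simp
  calc ((μ.prod (Measure.pi fun _ : Fin n => P))
        {p : ℝ × (Fin n → ℝ) |
          (t + B) / n4 + ε < kantorovich (obsEmpirical T ε p) μ}).toReal
      ≤ (μ sA).toReal := ENNReal.toReal_mono (measure_ne_top μ _) hmeasle
    _ ≤ Real.exp (-(t ^ 2 * Real.sqrt n) / (4 * C)) := hfinal1
    _ ≤ Real.exp (-(t ^ 2 * Real.sqrt n) / (4 * C * (1 + ε ^ 2))) := hfinal2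
end
end

section
/- Let X be a compact subset of ℝ, T : X → X Borel measurable, and μ a T-invariant Borel probability measure. Assume: (i) there exists c > 0 such that for every Lipschitz f : X → ℝ, Σ_{k=1}^{∞} |Cov_f(k)| ≤ c ‖f‖_Lip² with Cov_f(k) = ∫ f·(f∘T^k) dμ − (∫ f dμ)² and ‖f‖_Lip = Lip(f) + ‖f‖_∞, and let B > 0 be such that ∫ κ(E_n(x), μ) dμ(x) ≤ B n^{−1/4} for all n, where E_n(x) = (1/n) Σ_{i<n} δ_{T^i x}; (ii) (X,T,μ) satisfies the polynomial concentration inequality with moment q ≥ 2. Then there exists D_q > 0 such that for every ε > 0, every n ≥ 1, and every t > 0, the observed empirical measure Ẽ_n = (1/n) Σ_{i=0}^{n−1} δ_{y_i} satisfies μ_n ⊗ P^n(κ(Ẽ_n, μ) > (t + B)/n^{1/4} + ε) ≤ (D_q (1 + ε)^q / t^q) · n^{−q/4}. -/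
open MeasureTheory Real

noncomputable section

namespace ObsAux

instance : Nonempty {g : ℝ → ℝ // LipschitzWith 1 g} :=
  ⟨⟨fun _ => 0, (LipschitzWith.const 0).weaken zero_le_one⟩⟩

/-- the measure `(1/n) ∑ δ_{v i}` -/
def ptM (n : ℕ) (v : Fin n → ℝ) : Measure ℝ :=
  (n : ENNReal)⁻¹ • ∑ i : Fin n, Measure.dirac (v i)

lemma integral_ptM {n : ℕ} (v : Fin n → ℝ) (g : ℝ → ℝ) :
    ∫ x, g x ∂(ptM n v) = (n : ℝ)⁻¹ * ∑ i, g (v i) := by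
  rw [ptM, integral_smul_measure, integral_finset_sum_measure
    (fun i _ => (integrable_const (g (v i))).congr (ae_eq_dirac g).symm)]
  simp [smul_eq_mul]

lemma lip_abs {g : ℝ → ℝ} (hg : LipschitzWith 1 g) (a b : ℝ) :
    |g a - g b| ≤ |a - b| := by
  have := hg.dist_le_mul a b
  simpa [Real.dist_eq] using this

variable {μ : Measure ℝ} [IsProbabilityMeasure μ] {X : Set ℝ} {M : ℝ}

lemma ae_memX (hXc : IsCompact X) (hμX : μ X = 1) : ∀ᵐ z ∂μ, z ∈ X := by
  rw [ae_iff]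
  have : {z | ¬ z ∈ X} = Xᶜ := rfl
  rw [this, measure_compl hXc.isClosed.measurableSet (by simp), hμX]
  simp

lemma lip_integrable (hXc : IsCompact X) (hμX : μ X = 1)
    (hM : ∀ z ∈ X, |z| ≤ M) {g : ℝ → ℝ} (hg : LipschitzWith 1 g) :
    Integrable g μ := by
  refine Integrable.mono' (integrable_const (|g 0| + M))
    hg.continuous.aestronglyMeasurable ?_
  filter_upwards [ae_memX hXc hμX] with z hz
  have h1 : |g z - g 0| ≤ |z - 0| := lip_abs hg z 0
  have h2 := hM z hz
  have : |g z| ≤ |g 0| + |g z - g 0| := by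
    calc |g z| = |g 0 + (g z - g 0)| := by ring_nf
      _ ≤ |g 0| + |g z - g 0| := abs_add_le _ _
  simp only [Real.norm_eq_abs, sub_zero] at *
  linarith

lemma diff_le (hXc : IsCompact X) (hμX : μ X = 1) (hM : ∀ z ∈ X, |z| ≤ M)
    {n : ℕ} (hn : n ≠ 0) (v : Fin n → ℝ) {g : ℝ → ℝ} (hg : LipschitzWith 1 g) :
    ∫ x, g x ∂(ptM n v) - ∫ x, g x ∂μ ≤ (n : ℝ)⁻¹ * ∑ i, (|v i| + M) := by
  have hInt := lip_integrable hXc hμX hM hg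
  have h1 : ∀ i : Fin n, g (v i) - ∫ x, g x ∂μ ≤ |v i| + M := by
    intro i
    have e1 : g (v i) - ∫ x, g x ∂μ = ∫ z, (g (v i) - g z) ∂μ := by
      rw [integral_sub (integrable_const _) hInt, integral_const]
      simp
    rw [e1]
    calc ∫ z, (g (v i) - g z) ∂μ ≤ ∫ _z, (|v i| + M) ∂μ := by
          refine integral_mono_ae ((integrable_const _).sub hInt) (integrable_const _) ?_
          filter_upwards [ae_memX hXc hμX] with z hz
          have h2 := lip_abs hg (v i) z
          have h3 := hM z hz
          have h4 : |v i - z| ≤ |v i| + |z| := abs_sub _ _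
          have h5 : g (v i) - g z ≤ |g (v i) - g z| := le_abs_self _
          linarith
      _ = |v i| + M := by simp
  rw [integral_ptM]
  have hn' : (0:ℝ) < (n:ℝ) := by positivity
  have e2 : (n:ℝ)⁻¹ * ∑ i : Fin n, (g (v i) - ∫ x, g x ∂μ)
      = (n:ℝ)⁻¹ * ∑ i : Fin n, g (v i) - ∫ x, g x ∂μ := by
    rw [Finset.sum_sub_distrib, Finset.sum_const, Finset.card_univ, Fintype.card_fin, nsmul_eq_mul]
    field_simp
  rw [← e2]
  have := Finset.sum_le_sum (fun i (_ : i ∈ Finset.univ) => h1 i)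
  exact mul_le_mul_of_nonneg_left this (by positivity)

lemma bddAbove_kant (hXc : IsCompact X) (hμX : μ X = 1) (hM : ∀ z ∈ X, |z| ≤ M)
    {n : ℕ} (hn : n ≠ 0) (v : Fin n → ℝ) :
    BddAbove (Set.range fun g : {g : ℝ → ℝ // LipschitzWith 1 g} =>
      ∫ x, g.1 x ∂(ptM n v) - ∫ x, g.1 x ∂μ) := by
  refine ⟨(n : ℝ)⁻¹ * ∑ i, (|v i| + M), ?_⟩
  rintro _ ⟨g, rfl⟩
  exact diff_le hXc hμX hM hn v g.2

lemma kant_le_bound (hXc : IsCompact X) (hμX : μ X = 1) (hM : ∀ z ∈ X, |z| ≤ M)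
    {n : ℕ} (hn : n ≠ 0) (v : Fin n → ℝ) :
    kantorovich (ptM n v) μ ≤ (n : ℝ)⁻¹ * ∑ i, (|v i| + M) :=
  ciSup_le fun g => diff_le hXc hμX hM hn v g.2

lemma kant_nonneg (hXc : IsCompact X) (hμX : μ X = 1) (hM : ∀ z ∈ X, |z| ≤ M)
    {n : ℕ} (hn : n ≠ 0) (v : Fin n → ℝ) :
    0 ≤ kantorovich (ptM n v) μ := by
  have := le_ciSup (bddAbove_kant hXc hμX hM hn v)
    (⟨fun _ => 0, (LipschitzWith.const 0).weaken zero_le_one⟩ :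
      {g : ℝ → ℝ // LipschitzWith 1 g})
  simp at this; exact this

lemma kant_le_add (hXc : IsCompact X) (hμX : μ X = 1) (hM : ∀ z ∈ X, |z| ≤ M)
    {n : ℕ} (hn : n ≠ 0) (v w : Fin n → ℝ) :
    kantorovich (ptM n v) μ ≤ kantorovich (ptM n w) μ
      + (n : ℝ)⁻¹ * ∑ i, |v i - w i| := by
  refine ciSup_le fun g => ?_
  have h1 : ∫ x, g.1 x ∂(ptM n v) - ∫ x, g.1 x ∂μ
      ≤ (∫ x, g.1 x ∂(ptM n w) - ∫ x, g.1 x ∂μ) + (n : ℝ)⁻¹ * ∑ i, |v i - w i| := by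
    rw [integral_ptM, integral_ptM]
    have h2 : ∑ i : Fin n, g.1 (v i) ≤ ∑ i : Fin n, g.1 (w i) + ∑ i : Fin n, |v i - w i| := by
      rw [← Finset.sum_add_distrib]
      refine Finset.sum_le_sum fun i _ => ?_
      have := (le_abs_self (g.1 (v i) - g.1 (w i))).trans (lip_abs g.2 (v i) (w i))
      linarith
    have hn' : (0:ℝ) ≤ (n:ℝ)⁻¹ := by positivity
    nlinarith [mul_le_mul_of_nonneg_left h2 hn']
  exact h1.trans (add_le_add (le_ciSup (bddAbove_kant hXc hμX hM hn w) g) le_rfl)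

lemma kant_abs_le (hXc : IsCompact X) (hμX : μ X = 1) (hM : ∀ z ∈ X, |z| ≤ M)
    {n : ℕ} (hn : n ≠ 0) (v w : Fin n → ℝ) :
    |kantorovich (ptM n v) μ - kantorovich (ptM n w) μ|
      ≤ (n : ℝ)⁻¹ * ∑ i, |v i - w i| := by
  rw [abs_sub_le_iff]
  constructor
  · have := kant_le_add hXc hμX hM hn v w
    linarith
  · have := kant_le_add hXc hμX hM hn w v
    have e : ∑ i : Fin n, |w i - v i| = ∑ i : Fin n, |v i - w i| := by
      refine Finset.sum_congr rfl fun i _ => abs_sub_comm _ _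
    rw [e] at this
    linarith

end ObsAux
/-- Speed of convergence of the observed empirical measure, polynomial case:
`μ_n ⊗ P^n(κ(Ẽ_n, μ) > (t+B)/n^{1/4} + ε) ≤ (D_q (1+ε)^q / t^q) n^{-q/4}`. -/
theorem observed_empirical_measure_speed_polynomial
    (X : Set ℝ) (hX : IsCompact X) (T : ℝ → ℝ) (hT : Measurable T)
    (hTX : Set.MapsTo T X X)
    (μ : Measure ℝ) [IsProbabilityMeasure μ] (hμX : μ X = 1) (hinv : μ.map T = μ)
    (c : ℝ) (hc : 0 < c)
    (hcov : ∀ (f : ℝ → ℝ), Measurable f → ∀ Lf Mf : ℝ,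
      (∀ x ∈ X, ∀ y ∈ X, |f x - f y| ≤ Lf * dist x y) →
      (∀ x ∈ X, |f x| ≤ Mf) →
      Summable (fun k : ℕ =>
        |∫ x, f x * f (T^[k + 1] x) ∂μ - (∫ x, f x ∂μ) ^ 2|) ∧
      ∑' k : ℕ, |∫ x, f x * f (T^[k + 1] x) ∂μ - (∫ x, f x ∂μ) ^ 2|
        ≤ c * (Lf + Mf) ^ 2)
    (B : ℝ) (hB : 0 < B)
    (hBbound : ∀ n : ℕ, 1 ≤ n →
      ∫ x, kantorovich (empiricalMeasure T n x) μ ∂μ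
        ≤ B * (n : ℝ) ^ (-(1 / 4 : ℝ)))
    (q : ℝ) (hq : 2 ≤ q) (Cq : ℝ) (hCq : 0 < Cq)
    (hconc : ∀ (n : ℕ), 1 ≤ n → ∀ (K : (Fin n → ℝ) → ℝ) (L : Fin n → ℝ), SepLip K L →
      ∫ x, |K (fun i => T^[(i : ℕ)] x)
          - ∫ z, K (fun i => T^[(i : ℕ)] z) ∂μ| ^ q ∂μ
        ≤ Cq * (∑ j, L j ^ 2) ^ (q / 2))
    (P : Measure ℝ) [IsProbabilityMeasure P] (hP : ∀ᵐ ξ ∂P, |ξ| ≤ 1) :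
    ∃ Dq : ℝ, 0 < Dq ∧ ∀ ε : ℝ, 0 < ε → ∀ (n : ℕ), 1 ≤ n → ∀ t : ℝ, 0 < t →
      ((μ.prod (Measure.pi fun _ : Fin n => P))
          {p | (t + B) / (n : ℝ) ^ ((1 : ℝ) / 4) + ε
            < kantorovich (obsEmpirical T ε p) μ}).toReal
        ≤ (Dq * (1 + ε) ^ q / t ^ q) * (n : ℝ) ^ (-(q / 4)) := by
  classical
  obtain ⟨M, hM⟩ : ∃ M : ℝ, ∀ z ∈ X, |z| ≤ M := by
    obtain ⟨R, hR⟩ := hX.isBounded.exists_norm_le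
    exact ⟨R, fun z hz => hR z hz⟩
  have hM0 : 0 ≤ M := by
    obtain ⟨z, hz⟩ : X.Nonempty := by
      by_contra h
      rw [Set.not_nonempty_iff_eq_empty] at h
      simp [h] at hμX
    exact (abs_nonneg z).trans (hM z hz)
  have hq0 : (0:ℝ) ≤ q := by linarith
  refine ⟨Cq, hCq, ?_⟩
  intro ε hε n hn t ht
  have hn0 : n ≠ 0 := by omega
  have hnpos : (0:ℝ) < (n:ℝ) := by positivity
  set ν := Measure.pi fun _ : Fin n => P with hν
  set Kn : (Fin n → ℝ) → ℝ := fun v => kantorovich (ObsAux.ptM n v) μ with hKndef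
  -- separately Lipschitz
  have habs : ∀ v w : Fin n → ℝ, |Kn v - Kn w| ≤ (n:ℝ)⁻¹ * ∑ i, |v i - w i| :=
    fun v w => ObsAux.kant_abs_le hX hμX hM hn0 v w
  have hsep : SepLip Kn (fun _ => (n:ℝ)⁻¹) := by
    intro v j y
    refine (habs v (Function.update v j y)).trans ?_
    have e : ∑ i : Fin n, |v i - Function.update v j y i| = |v j - y| := by
      rw [Finset.sum_eq_single j]
      · simp
      · intro i _ hij
        simp [Function.update_of_ne hij]
      · simp
    rw [e, Real.dist_eq]
  -- continuity
  have hcont : Continuous Kn := by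
    refine (LipschitzWith.of_dist_le_mul (K := 1) fun v w => ?_).continuous
    rw [Real.dist_eq]
    refine (habs v w).trans ?_
    have h1 : ∑ i : Fin n, |v i - w i| ≤ ∑ _i : Fin n, dist v w :=
      Finset.sum_le_sum fun i _ => by
        rw [← Real.dist_eq]; exact dist_le_pi_dist v w i
    have h2 : (n:ℝ)⁻¹ * ∑ _i : Fin n, dist v w = dist v w := by
      rw [Finset.sum_const, Finset.card_univ, Fintype.card_fin, nsmul_eq_mul]
      field_simp
    calc (n:ℝ)⁻¹ * ∑ i : Fin n, |v i - w i| ≤ (n:ℝ)⁻¹ * ∑ _i : Fin n, dist v w :=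
          mul_le_mul_of_nonneg_left h1 (by positivity)
      _ = 1 * dist v w := by rw [h2, one_mul]
  -- identification with empiricalMeasure
  have hKE : ∀ x : ℝ, Kn (fun i => T^[(i:ℕ)] x) = kantorovich (empiricalMeasure T n x) μ := by
    intro x
    have : ObsAux.ptM n (fun i : Fin n => T^[(i:ℕ)] x) = empiricalMeasure T n x := by
      rw [ObsAux.ptM, empiricalMeasure, Fin.sum_univ_eq_sum_range (fun i => Measure.dirac (T^[i] x)) n]
    exact congrArg (fun m' => kantorovich m' μ) this
  set m : ℝ := ∫ z, Kn (fun i => T^[(i:ℕ)] z) ∂μ with hmdef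
  have hm : m ≤ B * (n:ℝ) ^ (-(1/4 : ℝ)) := by
    rw [hmdef]
    simp_rw [hKE]
    exact hBbound n hn
  -- concentration
  have hconc' := hconc n hn Kn (fun _ => (n:ℝ)⁻¹) hsep
  rw [← hmdef] at hconc'
  beta_reduce at hconc'
  have hsum : (∑ _j : Fin n, ((n:ℝ)⁻¹) ^ 2) = (n:ℝ)⁻¹ := by
    rw [Finset.sum_const, Finset.card_univ, Fintype.card_fin, nsmul_eq_mul]
    field_simp
  rw [hsum] at hconc'
  set a : ℝ := t / (n:ℝ) ^ ((1:ℝ)/4) with hadef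
  have hapos : 0 < a := by
    apply div_pos ht (Real.rpow_pos_of_pos hnpos _)
  set f : ℝ → ℝ := fun x => |Kn (fun i => T^[(i:ℕ)] x) - m| ^ q with hfdef
  have htraj : Measurable fun x : ℝ => (fun i : Fin n => T^[(i:ℕ)] x) :=
    measurable_pi_lambda _ fun i => hT.iterate (i:ℕ)
  have hfm : AEStronglyMeasurable f μ := by
    have h1 : Measurable fun x => Kn (fun i : Fin n => T^[(i:ℕ)] x) :=
      hcont.measurable.comp htraj
    have h2 : Continuous fun s : ℝ => |s| ^ q :=
      (Real.continuous_rpow_const hq0).comp continuous_abs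
    exact (h2.measurable.comp (h1.sub measurable_const)).aestronglyMeasurable
  have hboundK : ∀ z ∈ X, |Kn (fun i : Fin n => T^[(i:ℕ)] z) - m| ≤ 2*M + |m| := by
    intro z hz
    have h1 : 0 ≤ Kn (fun i : Fin n => T^[(i:ℕ)] z) :=
      ObsAux.kant_nonneg hX hμX hM hn0 _
    have h2 : Kn (fun i : Fin n => T^[(i:ℕ)] z) ≤ 2*M := by
      refine (ObsAux.kant_le_bound hX hμX hM hn0 _).trans ?_
      have h3 : ∑ i : Fin n, (|T^[(i:ℕ)] z| + M) ≤ ∑ _i : Fin n, (2*M) := by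
        refine Finset.sum_le_sum fun i _ => ?_
        have := hM _ (hTX.iterate (i:ℕ) hz)
        linarith
      calc (n:ℝ)⁻¹ * ∑ i : Fin n, (|T^[(i:ℕ)] z| + M)
          ≤ (n:ℝ)⁻¹ * ∑ _i : Fin n, (2*M) := mul_le_mul_of_nonneg_left h3 (by positivity)
        _ = 2*M := by
            rw [Finset.sum_const, Finset.card_univ, Fintype.card_fin, nsmul_eq_mul]
            field_simp
    calc |Kn (fun i : Fin n => T^[(i:ℕ)] z) - m|
        ≤ |Kn (fun i : Fin n => T^[(i:ℕ)] z)| + |m| := abs_sub _ _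
      _ ≤ 2*M + |m| := by rw [abs_of_nonneg h1]; linarith
  have hfint : Integrable f μ := by
    refine Integrable.mono' (integrable_const ((2*M + |m|) ^ q)) hfm ?_
    filter_upwards [ObsAux.ae_memX hX hμX] with z hz
    have h3 := hboundK z hz
    have h4 : (0:ℝ) ≤ |Kn (fun i : Fin n => T^[(i:ℕ)] z) - m| := abs_nonneg _
    rw [hfdef]
    simp only [Real.norm_eq_abs]
    rw [abs_of_nonneg (Real.rpow_nonneg h4 q)]
    exact Real.rpow_le_rpow h4 h3 hq0
  -- Markov
  have hmar := mul_meas_ge_le_integral_of_nonneg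
    (ae_of_all μ fun x => Real.rpow_nonneg (abs_nonneg _) q) hfint (a ^ q)
  set A : Set ℝ := {x | a < |Kn (fun i : Fin n => T^[(i:ℕ)] x) - m|} with hAdef
  have hAsub : A ⊆ {x | a ^ q ≤ f x} := by
    intro x hx
    exact Real.rpow_le_rpow hapos.le (le_of_lt hx) hq0
  -- bad noise set is null
  have hGnull : ν {ξ : Fin n → ℝ | ¬ ∀ i, |ξ i| ≤ 1} = 0 := by
    have hPnull : P {x : ℝ | ¬ |x| ≤ 1} = 0 := ae_iff.mp hP
    rw [hν]
    refine measure_mono_null (fun ξ hξ => ?_)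
      (measure_iUnion_null (s := fun i : Fin n => Function.eval i ⁻¹' {x : ℝ | ¬ |x| ≤ 1})
        fun i => Measure.pi_eval_preimage_null (μ := fun _ : Fin n => P) hPnull)
    simp only [Set.mem_setOf_eq, not_forall] at hξ
    obtain ⟨i, hi⟩ := hξ
    exact Set.mem_iUnion.mpr ⟨i, hi⟩
  -- inclusion of the event
  have hBn : B * (n:ℝ) ^ (-(1/4 : ℝ)) = B / (n:ℝ) ^ ((1:ℝ)/4) := by
    rw [Real.rpow_neg hnpos.le]
    ring
  have hsubset : {p : ℝ × (Fin n → ℝ) | (t + B) / (n : ℝ) ^ ((1 : ℝ) / 4) + ε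
        < kantorovich (obsEmpirical T ε p) μ}
      ⊆ (Prod.snd ⁻¹' {ξ : Fin n → ℝ | ¬ ∀ i, |ξ i| ≤ 1}) ∪ (Prod.fst ⁻¹' A) := by
    intro p hp
    by_cases hξ : ∀ i, |p.2 i| ≤ 1
    · right
      have hobs : obsEmpirical T ε p
          = ObsAux.ptM n (fun i : Fin n => T^[(i:ℕ)] p.1 + ε * p.2 i) := rfl
      have h1 : kantorovich (obsEmpirical T ε p) μ ≤ Kn (fun i : Fin n => T^[(i:ℕ)] p.1) + ε := by
        rw [hobs]
        refine (ObsAux.kant_le_add hX hμX hM hn0 _ (fun i : Fin n => T^[(i:ℕ)] p.1)).trans ?_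
        have h2 : ∑ i : Fin n, |(T^[(i:ℕ)] p.1 + ε * p.2 i) - T^[(i:ℕ)] p.1|
            ≤ ∑ _i : Fin n, ε := by
          refine Finset.sum_le_sum fun i _ => ?_
          have : |(T^[(i:ℕ)] p.1 + ε * p.2 i) - T^[(i:ℕ)] p.1| = ε * |p.2 i| := by
            rw [show (T^[(i:ℕ)] p.1 + ε * p.2 i) - T^[(i:ℕ)] p.1 = ε * p.2 i by ring,
              abs_mul, abs_of_pos hε]
          rw [this]
          nlinarith [hξ i]
        have h3 : (n:ℝ)⁻¹ * ∑ _i : Fin n, ε = ε := by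
          rw [Finset.sum_const, Finset.card_univ, Fintype.card_fin, nsmul_eq_mul]
          field_simp
        have h4 := mul_le_mul_of_nonneg_left h2 (show (0:ℝ) ≤ (n:ℝ)⁻¹ by positivity)
        rw [h3] at h4
        linarith [h4]
      have hp' : (t + B) / (n : ℝ) ^ ((1 : ℝ) / 4) + ε < kantorovich (obsEmpirical T ε p) μ := hp
      have h5 : (t + B) / (n : ℝ) ^ ((1 : ℝ) / 4) < Kn (fun i : Fin n => T^[(i:ℕ)] p.1) := by
        linarith
      have h6 : (t + B) / (n : ℝ) ^ ((1 : ℝ) / 4) = a + B / (n:ℝ) ^ ((1:ℝ)/4) := by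
        rw [hadef, add_div]
      have h7 : a < Kn (fun i : Fin n => T^[(i:ℕ)] p.1) - m := by
        rw [h6] at h5
        rw [hBn] at hm
        linarith
      exact lt_of_lt_of_le h7 (le_abs_self _)
    · left; exact hξ
  -- measure comparison
  have hmeas1 : (μ.prod ν) {p : ℝ × (Fin n → ℝ) | (t + B) / (n : ℝ) ^ ((1 : ℝ) / 4) + ε
        < kantorovich (obsEmpirical T ε p) μ} ≤ μ {x | a ^ q ≤ f x} := by
    refine (measure_mono hsubset).trans ?_
    refine (measure_union_le _ _).trans ?_
    have e1 : (μ.prod ν) (Prod.snd ⁻¹' {ξ : Fin n → ℝ | ¬ ∀ i, |ξ i| ≤ 1}) = 0 := by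
      refine le_antisymm ?_ zero_le
      refine (Measure.le_map_apply measurable_snd.aemeasurable _).trans ?_
      rw [Measure.map_snd_prod, measure_univ, one_smul, hGnull]
    have e2 : (μ.prod ν) (Prod.fst ⁻¹' A) ≤ μ A := by
      refine (Measure.le_map_apply measurable_fst.aemeasurable _).trans ?_
      rw [Measure.map_fst_prod, measure_univ, one_smul]
    rw [e1, zero_add]
    exact e2.trans (measure_mono hAsub)
  -- put everything together
  have haq : 0 < a ^ q := Real.rpow_pos_of_pos hapos q
  have hchain : a ^ q * ((μ.prod ν) {p : ℝ × (Fin n → ℝ) |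
        (t + B) / (n : ℝ) ^ ((1 : ℝ) / 4) + ε
        < kantorovich (obsEmpirical T ε p) μ}).toReal ≤ Cq * ((n:ℝ)⁻¹) ^ (q/2) := by
    have h1 : ((μ.prod ν) {p : ℝ × (Fin n → ℝ) |
          (t + B) / (n : ℝ) ^ ((1 : ℝ) / 4) + ε
          < kantorovich (obsEmpirical T ε p) μ}).toReal
        ≤ (μ {x | a ^ q ≤ f x}).toReal :=
      ENNReal.toReal_mono (measure_ne_top μ _) hmeas1
    calc a ^ q * ((μ.prod ν) _).toReal ≤ a ^ q * (μ {x | a ^ q ≤ f x}).toReal :=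
          mul_le_mul_of_nonneg_left h1 haq.le
      _ ≤ ∫ x, f x ∂μ := hmar
      _ ≤ Cq * ((n:ℝ)⁻¹) ^ (q/2) := hconc'
  have hfinal : ((μ.prod ν) {p : ℝ × (Fin n → ℝ) |
        (t + B) / (n : ℝ) ^ ((1 : ℝ) / 4) + ε
        < kantorovich (obsEmpirical T ε p) μ}).toReal
      ≤ Cq * ((n:ℝ)⁻¹) ^ (q/2) / a ^ q := by
    rw [le_div_iff₀ haq]
    have := hchain
    rw [mul_comm] at this
    exact this
  refine hfinal.trans ?_
  -- final arithmetic
  have e3 : ((n:ℝ)⁻¹) ^ (q/2) = (n:ℝ) ^ (-(q/2)) := by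
    rw [Real.inv_rpow hnpos.le, ← Real.rpow_neg hnpos.le]
  have e4 : a ^ q = t ^ q / (n:ℝ) ^ (q/4) := by
    rw [hadef, Real.div_rpow ht.le (Real.rpow_nonneg hnpos.le _), ← Real.rpow_mul hnpos.le,
      show (1:ℝ)/4 * q = q/4 by ring]
  have e5 : (n:ℝ) ^ (-(q/2)) * (n:ℝ) ^ (q/4) = (n:ℝ) ^ (-(q/4)) := by
    rw [← Real.rpow_add hnpos]
    congr 1
    ring
  have e6 : Cq * ((n:ℝ)⁻¹) ^ (q/2) / a ^ q = Cq * (n:ℝ) ^ (-(q/4)) / t ^ q := by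
    rw [e3, e4, div_div_eq_mul_div, mul_assoc, e5]
  rw [e6]
  have h1le : (1:ℝ) ≤ (1 + ε) ^ q := Real.one_le_rpow (by linarith) hq0
  have htq : (0:ℝ) < t ^ q := Real.rpow_pos_of_pos ht q
  have hnq : (0:ℝ) ≤ (n:ℝ) ^ (-(q/4)) := Real.rpow_nonneg hnpos.le _
  have h8 : Cq * (n:ℝ) ^ (-(q/4)) ≤ Cq * (1 + ε) ^ q * (n:ℝ) ^ (-(q/4)) := by
    nlinarith [mul_nonneg (mul_nonneg hCq.le hnq) (sub_nonneg.mpr h1le)]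
  calc Cq * (n:ℝ) ^ (-(q/4)) / t ^ q
      ≤ Cq * (1 + ε) ^ q * (n:ℝ) ^ (-(q/4)) / t ^ q := by
        exact (div_le_div_iff_of_pos_right htq).mpr h8
    _ = Cq * (1 + ε) ^ q / t ^ q * (n:ℝ) ^ (-(q/4)) := by ring
end
end
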